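/- For every natural number n ≥ 2, the identity (X + (1-q) s D_q) L_n(x,-s) = L_{n+1}(x,-s) + s · L_{n-1}(x,-s) holds, where the left-hand side is the operator X + (1-q) s D_q applied to the polynomial L_n(x,-s). -/
import Mathlib


noncomputable section

/-- The field `ℚ(q,s)` of rational functions in two indeterminates. -/
abbrev F : Type := FractionRing (MvPolynomial (Fin 2) ℚ)

/-- The indeterminate `q`. -/
def q : F := algebraMap (MvPolynomial (Fin 2) ℚ) F (MvPolynomial.X 0)

/-- The indeterminate `s`. -/
def s : F := algebraMap (MvPolynomial (Fin 2) ℚ) F (MvPolynomial.X 1)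

/-- The q-integer `[n]_q = 1 + q + ⋯ + q^{n-1}`. -/
def qInt (n : ℕ) : F := ∑ i ∈ Finset.range n, q ^ i

/-- The q-factorial `[n]_q! = ∏_{k=1}^n [k]_q`. -/
def qFact (n : ℕ) : F := ∏ k ∈ Finset.range n, qInt (k + 1)

/-- The q-binomial coefficient `[n choose k]_q = [n]_q!/([k]_q! [n-k]_q!)`. -/
def qBinom (n k : ℕ) : F := qFact n / (qFact k * qFact (n - k))

/-- The operator `X` of multiplication by `x` on `F[x]`. -/
def Xop : Module.End F (Polynomial F) := LinearMap.mulLeft F Polynomial.X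

/-- Division by `x` (discarding the constant term), as a linear map. -/
def divXL : Polynomial F →ₗ[F] Polynomial F where
  toFun := Polynomial.divX
  map_add' p r := Polynomial.divX_add
  map_smul' a p := by
    ext n
    simp [Polynomial.coeff_divX, Polynomial.coeff_smul]

/-- The q-derivative `D_q f(x) = (f(qx) - f(x))/((q-1)x)`; it is the F-linear
operator on `F[x]` determined by `D_q x^n = [n]_q x^{n-1}`. -/
def Dq : Module.End F (Polynomial F) :=
  (q - 1)⁻¹ •
    (divXL ∘ₗ
      ((Polynomial.aeval (Polynomial.C q * Polynomial.X)).toLinearMap - LinearMap.id))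

/-- The polynomials `h_n(x,t) = Σ_j q^{j²} t^j [n]_q!/((1+q)⋯(1+q^j)·[j]_q!·[n-2j]_q!)
x^{n-2j}` (the parameter `t` will be specialized to `s` or `q²s`). -/
def h (t : F) (n : ℕ) : Polynomial F :=
  ∑ j ∈ Finset.range (n / 2 + 1),
    Polynomial.C (q ^ (j ^ 2) * t ^ j * qFact n /
        ((∏ i ∈ Finset.range j, (1 + q ^ (i + 1))) * qFact j * qFact (n - 2 * j))) *
      Polynomial.X ^ (n - 2 * j)


/-- The q-Lucas polynomials: `L 0 = 1` and, for `n ≥ 1`,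
`L_n(x,t) = Σ_{k=0}^{⌊n/2⌋} q^{C(k,2)} ([n]_q/[n-k]_q) [n-k choose k]_q t^k x^{n-2k}`. -/
def L (t : F) : ℕ → Polynomial F
  | 0 => 1
  | n + 1 =>
    ∑ k ∈ Finset.range ((n + 1) / 2 + 1),
      Polynomial.C (q ^ k.choose 2 * (qInt (n + 1) / qInt (n + 1 - k)) *
          qBinom (n + 1 - k) k * t ^ k) *
        Polynomial.X ^ (n + 1 - 2 * k)


open Polynomial Finset

lemma amap_ne_zero {p : MvPolynomial (Fin 2) ℚ} (h : p ≠ 0) :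
    algebraMap (MvPolynomial (Fin 2) ℚ) F p ≠ 0 := by
  simpa using (IsFractionRing.to_map_eq_zero_iff (K := F)).not.mpr h

lemma pow_sub_one_ne (m : ℕ) (hm : 1 ≤ m) : q ^ m - 1 ≠ 0 := by
  have h : q ^ m - 1 =
      algebraMap (MvPolynomial (Fin 2) ℚ) F (MvPolynomial.X 0 ^ m - 1) := by
    simp [q, map_sub, map_pow]
  rw [h]
  apply amap_ne_zero
  intro hp
  have h2 := congrArg (MvPolynomial.eval (fun _ => (2:ℚ))) hp
  simp [MvPolynomial.eval_pow] at h2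
  have : (1:ℚ) < 2 ^ m := one_lt_pow₀ (by norm_num) (by omega)
  linarith

lemma q_sub_one_ne : q - 1 ≠ 0 := by simpa using pow_sub_one_ne 1 le_rfl

lemma q_ne_zero : q ≠ 0 := by
  rw [q]
  apply amap_ne_zero
  intro hp
  have h2 := congrArg (MvPolynomial.eval (fun _ => (2:ℚ))) hp
  simp at h2

lemma qInt_mul (m : ℕ) : qInt m * (q - 1) = q ^ m - 1 := by
  rw [qInt]; exact geom_sum_mul q m

lemma qInt_eq (m : ℕ) : qInt m = (q ^ m - 1) / (q - 1) := by
  rw [eq_div_iff q_sub_one_ne]; exact qInt_mul m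

lemma qInt_ne_zero (m : ℕ) (hm : 1 ≤ m) : qInt m ≠ 0 := by
  intro h
  have := qInt_mul m
  rw [h, zero_mul] at this
  exact pow_sub_one_ne m hm this.symm

lemma qFact_ne_zero (m : ℕ) : qFact m ≠ 0 := by
  rw [qFact]
  exact Finset.prod_ne_zero_iff.mpr fun k _ => qInt_ne_zero (k+1) (by omega)

lemma qFact_succ (m : ℕ) : qFact (m + 1) = qFact m * qInt (m + 1) := by
  rw [qFact, qFact, Finset.prod_range_succ]

lemma qInt_one : qInt 1 = 1 := by simp [qInt]

lemma qFact_one : qFact 1 = 1 := by simp [qFact, qInt_one]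

lemma qFact_zero : qFact 0 = 1 := by simp [qFact]

lemma Xop_monomial (c : F) (e : ℕ) :
    Xop (Polynomial.C c * Polynomial.X ^ e) = Polynomial.C c * Polynomial.X ^ (e + 1) := by
  simp [Xop, LinearMap.mulLeft_apply]; ring

lemma divX_C_mul_X_pow (c : F) (e : ℕ) :
    (Polynomial.C c * Polynomial.X ^ (e + 1)).divX = Polynomial.C c * Polynomial.X ^ e := by
  ext n
  simp [Polynomial.coeff_divX, Polynomial.coeff_C_mul, Polynomial.coeff_X_pow]

lemma Dq_monomial (c : F) (e : ℕ) :
    Dq (Polynomial.C c * Polynomial.X ^ e) =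
      Polynomial.C (c * qInt e) * Polynomial.X ^ (e - 1) := by
  cases e with
  | zero =>
    simp [Dq, divXL, qInt]
  | succ e =>
    have h1 : (Polynomial.aeval (Polynomial.C q * Polynomial.X))
        (Polynomial.C c * Polynomial.X ^ (e+1)) - (Polynomial.C c * Polynomial.X ^ (e+1))
        = Polynomial.C (c * (q ^ (e+1) - 1)) * Polynomial.X ^ (e+1) := by
      rw [map_mul, map_pow, Polynomial.aeval_C, Polynomial.aeval_X]
      rw [mul_pow, ← Polynomial.C_pow]
      simp only [Polynomial.algebraMap_eq, Polynomial.C_mul, Polynomial.C_sub, Polynomial.C_1]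
      ring
    have h2 : Dq (Polynomial.C c * Polynomial.X ^ (e+1)) =
        (q - 1)⁻¹ • (Polynomial.C (c * (q ^ (e+1) - 1)) * Polynomial.X ^ e) := by
      rw [Dq]
      simp only [LinearMap.smul_apply, LinearMap.comp_apply, LinearMap.sub_apply,
        AlgHom.toLinearMap_apply, LinearMap.id_apply]
      rw [show (divXL : Polynomial F →ₗ[F] Polynomial F) ((Polynomial.aeval (Polynomial.C q * Polynomial.X))
        (Polynomial.C c * Polynomial.X ^ (e+1)) - (Polynomial.C c * Polynomial.X ^ (e+1))) =
        Polynomial.divX ((Polynomial.aeval (Polynomial.C q * Polynomial.X))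
        (Polynomial.C c * Polynomial.X ^ (e+1)) - (Polynomial.C c * Polynomial.X ^ (e+1))) from rfl]
      rw [h1, divX_C_mul_X_pow]
    rw [h2, ← smul_mul_assoc, Polynomial.smul_C, smul_eq_mul]
    congr 2
    rw [qInt_eq]
    field_simp [q_sub_one_ne]

/-- The coefficient of `x^{n-2k}` in `L_n(x,t)` (without the `t^k`). -/
def a (n k : ℕ) : F :=
  q ^ k.choose 2 * (qInt n / qInt (n - k)) * qBinom (n - k) k

lemma L_eq (t : F) (n : ℕ) (hn : 1 ≤ n) :
    L t n = ∑ k ∈ Finset.range (n / 2 + 1),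
      Polynomial.C (a n k * t ^ k) * Polynomial.X ^ (n - 2 * k) := by
  obtain ⟨m, rfl⟩ := Nat.exists_eq_succ_of_ne_zero (by omega : n ≠ 0)
  rfl

lemma a_zero (n : ℕ) (hn : 1 ≤ n) : a n 0 = 1 := by
  rw [a, qBinom]
  simp [qFact_zero, div_self (qInt_ne_zero n hn), div_self (qFact_ne_zero n)]

lemma choose_succ (j : ℕ) : (j + 1).choose 2 = j.choose 2 + j := by
  rw [Nat.choose_succ_succ]
  simp [Nat.choose_one_right, Nat.add_comm]

lemma hQ (j u : ℕ) :
    q^j * qInt (2*j+3+u) * qInt (j+1+u) + (1-q) * qInt (2*j+2+u) * qInt (j+1) * qInt (j+1+u)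
    = q^j * qInt (2*j+2+u) * qInt (u+1) + qInt (2*j+1+u) * qInt (j+1) := by
  rw [qInt_eq (2*j+3+u), qInt_eq (j+1+u), qInt_eq (2*j+2+u), qInt_eq (j+1),
      qInt_eq (u+1), qInt_eq (2*j+1+u)]
  field_simp [q_sub_one_ne]
  ring

lemma hA1 (j u : ℕ) :
    a (2*j+2+u) (j+1) * (qFact j * qFact u * qInt (j+1) * qInt (j+1+u))
      = q^(j.choose 2 + j) * qInt (2*j+2+u) * qFact (j+1+u) := by
  rw [a, qBinom, show 2*j+2+u - (j+1) = j+1+u by omega, show j+1+u - (j+1) = u by omega,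
      choose_succ, qFact_succ j]
  have h1 := qInt_ne_zero (j+1+u) (by omega)
  have h2 := qInt_ne_zero (j+1) (by omega)
  rw [mul_assoc (q ^ _), div_mul_div_comm, ← mul_div_assoc, div_mul_eq_mul_div,
    div_eq_iff (by simp [qFact_ne_zero, h1, h2])]
  ring

lemma hA2 (j u : ℕ) :
    a (2*j+2+u) j * qInt (u+2) * (qFact j * qFact u * qInt (u+1))
      = q^(j.choose 2) * qInt (2*j+2+u) * qFact (j+1+u) := by
  rw [a, qBinom, show 2*j+2+u - j = j+2+u by omega, show j+2+u - j = u+2 by omega,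
      show qFact (j+2+u) = qFact (j+1+u) * qInt (j+2+u) by
        rw [show j+2+u = (j+1+u)+1 by omega, qFact_succ, show j+1+u+1 = j+2+u by omega],
      show qFact (u+2) = qFact u * qInt (u+1) * qInt (u+2) by
        rw [show u+2 = (u+1)+1 by omega, qFact_succ, qFact_succ, show u+1+1 = u+2 by omega]]
  have h1 := qInt_ne_zero (j+2+u) (by omega)
  have h2 := qInt_ne_zero (u+1) (by omega)
  have h3 := qInt_ne_zero (u+2) (by omega)
  rw [mul_assoc (q ^ _), div_mul_div_comm, ← mul_div_assoc, div_mul_eq_mul_div,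
    div_mul_eq_mul_div, div_eq_iff (by simp [qFact_ne_zero, h1, h2, h3])]
  ring

lemma hA3 (j u : ℕ) :
    a (2*j+3+u) (j+1) * (qFact j * qFact u * qInt (j+1) * qInt (u+1))
      = q^(j.choose 2 + j) * qInt (2*j+3+u) * qFact (j+1+u) := by
  rw [a, qBinom, show 2*j+3+u - (j+1) = j+2+u by omega, show j+2+u - (j+1) = u+1 by omega,
      choose_succ, qFact_succ j, qFact_succ u,
      show qFact (j+2+u) = qFact (j+1+u) * qInt (j+2+u) by
        rw [show j+2+u = (j+1+u)+1 by omega, qFact_succ, show j+1+u+1 = j+2+u by omega]]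
  have h1 := qInt_ne_zero (j+2+u) (by omega)
  have h2 := qInt_ne_zero (j+1) (by omega)
  have h3 := qInt_ne_zero (u+1) (by omega)
  rw [mul_assoc (q ^ _), div_mul_div_comm, ← mul_div_assoc, div_mul_eq_mul_div,
    div_eq_iff (by simp [qFact_ne_zero, h1, h2, h3])]
  ring

lemma hA4 (j u : ℕ) :
    a (2*j+1+u) j * (qFact j * qFact u * qInt (u+1) * qInt (j+1+u))
      = q^(j.choose 2) * qInt (2*j+1+u) * qFact (j+1+u) := by
  rw [a, qBinom, show 2*j+1+u - j = j+1+u by omega, show j+1+u - j = u+1 by omega,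
      qFact_succ u]
  have h1 := qInt_ne_zero (j+1+u) (by omega)
  have h2 := qInt_ne_zero (u+1) (by omega)
  rw [mul_assoc (q ^ _), div_mul_div_comm, ← mul_div_assoc, div_mul_eq_mul_div,
    div_eq_iff (by simp [qFact_ne_zero, h1, h2])]
  ring

lemma key (j u : ℕ) :
    a (2*j+2+u) (j+1) * (-s)^(j+1)
      + (1-q)*s*(a (2*j+2+u) j * (-s)^j * qInt (u+2))
    = a (2*j+3+u) (j+1) * (-s)^(j+1) + s * (a (2*j+1+u) j * (-s)^j) := by
  have hD : qFact j * qFact u * qInt (j+1) * qInt (u+1) * qInt (j+1+u) ≠ 0 := by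
    simp [qFact_ne_zero, qInt_ne_zero (j+1) (by omega), qInt_ne_zero (u+1) (by omega),
      qInt_ne_zero (j+1+u) (by omega)]
  refine mul_left_cancel₀ hD ?_
  linear_combination ((-s)^(j+1) * qInt (u+1)) * hA1 j u
    + ((1-q)*s*(-s)^j * qInt (j+1) * qInt (j+1+u)) * hA2 j u
    - ((-s)^(j+1) * qInt (j+1+u)) * hA3 j u
    - (s*(-s)^j * qInt (j+1)) * hA4 j u
    + (q^(j.choose 2) * qFact (j+1+u) * s * (-s)^j) * hQ j u

lemma hQ2 (m : ℕ) :
    (1-q) * qInt (2*m+1) * qInt (m+1) * qInt m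
      = qInt (2*m) * qInt (m+1) - q^m * qInt (2*m+2) * qInt m := by
  rw [qInt_eq (2*m+1), qInt_eq (m+1), qInt_eq m, qInt_eq (2*m), qInt_eq (2*m+2)]
  field_simp [q_sub_one_ne]
  ring

lemma hB1 (m : ℕ) : a (2*m+1) m = q^(m.choose 2) * qInt (2*m+1) := by
  rw [a, qBinom, show 2*m+1-m = m+1 by omega, show m+1-m = 1 by omega, qFact_one,
    qFact_succ m]
  rw [mul_assoc (q ^ _), div_mul_div_comm, ← mul_div_assoc,
    div_eq_iff (by simp [qFact_ne_zero, qInt_ne_zero (m+1) (by omega)])]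
  ring

lemma hB2 (m : ℕ) : a (2*m+2) (m+1) * qInt (m+1) = q^(m.choose 2 + m) * qInt (2*m+2) := by
  rw [a, qBinom, show 2*m+2-(m+1) = m+1 by omega, show m+1-(m+1) = 0 by omega, qFact_zero,
    choose_succ]
  rw [mul_assoc (q ^ _), div_mul_div_comm, ← mul_div_assoc, div_mul_eq_mul_div,
    div_eq_iff (by simp [qFact_ne_zero, qInt_ne_zero (m+1) (by omega)])]
  ring

lemma hB3 (m : ℕ) (hm : 1 ≤ m) : a (2*m) m * qInt m = q^(m.choose 2) * qInt (2*m) := by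
  rw [a, qBinom, show 2*m-m = m by omega, show m-m = 0 by omega, qFact_zero]
  rw [mul_assoc (q ^ _), div_mul_div_comm, ← mul_div_assoc, div_mul_eq_mul_div,
    div_eq_iff (by simp [qFact_ne_zero, qInt_ne_zero m hm])]
  ring

lemma keyTop (m : ℕ) (hm : 1 ≤ m) :
    (1-q)*s*(a (2*m+1) m * (-s)^m * qInt 1)
      = a (2*m+2) (m+1) * (-s)^(m+1) + s * (a (2*m) m * (-s)^m) := by
  have hD : qInt m * qInt (m+1) ≠ 0 := by
    simp [qInt_ne_zero m hm, qInt_ne_zero (m+1) (by omega)]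
  refine mul_left_cancel₀ hD ?_
  rw [qInt_one]
  linear_combination ((1-q)*s*(-s)^m * qInt m * qInt (m+1)) * hB1 m
    - ((-s)^(m+1) * qInt m) * hB2 m
    - (s * (-s)^m * qInt (m+1)) * hB3 m hm
    + (s * (-s)^m * q^(m.choose 2)) * hQ2 m

lemma core (n m : ℕ) (hm : 1 ≤ m) (hmn : 2*m ≤ n) :
    (∑ k ∈ Finset.range (m+1), Polynomial.C (a n k * (-s)^k) * Polynomial.X^(n+1-2*k))
      + ∑ k ∈ Finset.range m,
          Polynomial.C ((1-q)*s*(a n k * (-s)^k * qInt (n-2*k))) * Polynomial.X^(n-1-2*k)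
    = (∑ k ∈ Finset.range (m+1), Polynomial.C (a (n+1) k * (-s)^k) * Polynomial.X^(n+1-2*k))
      + ∑ k ∈ Finset.range m,
          Polynomial.C (s * (a (n-1) k * (-s)^k)) * Polynomial.X^(n-1-2*k) := by
  rw [Finset.sum_range_succ' (fun k => Polynomial.C (a n k * (-s)^k) * Polynomial.X^(n+1-2*k)) m,
      Finset.sum_range_succ' (fun k => Polynomial.C (a (n+1) k * (-s)^k) * Polynomial.X^(n+1-2*k)) m]
  have h0 : Polynomial.C (a n 0 * (-s)^0) * Polynomial.X^(n+1-2*0)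
      = Polynomial.C (a (n+1) 0 * (-s)^0) * Polynomial.X^(n+1-2*0) := by
    rw [a_zero n (by omega), a_zero (n+1) (by omega)]
  have hsum : (∑ k ∈ Finset.range m,
        Polynomial.C (a n (k+1) * (-s)^(k+1)) * Polynomial.X^(n+1-2*(k+1)))
      + ∑ k ∈ Finset.range m,
          Polynomial.C ((1-q)*s*(a n k * (-s)^k * qInt (n-2*k))) * Polynomial.X^(n-1-2*k)
      = (∑ k ∈ Finset.range m,
          Polynomial.C (a (n+1) (k+1) * (-s)^(k+1)) * Polynomial.X^(n+1-2*(k+1)))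
        + ∑ k ∈ Finset.range m,
            Polynomial.C (s * (a (n-1) k * (-s)^k)) * Polynomial.X^(n-1-2*k) := by
    rw [← Finset.sum_add_distrib, ← Finset.sum_add_distrib]
    refine Finset.sum_congr rfl fun k hk => ?_
    have hk' : 2*k+2 ≤ n := by
      have := Finset.mem_range.mp hk; omega
    obtain ⟨u, rfl⟩ : ∃ u, n = 2*k+2+u := ⟨n-(2*k+2), by omega⟩
    simp only [show 2*k+2+u+1-2*(k+1) = u+1 by omega,
      show 2*k+2+u-1-2*k = u+1 by omega,
      show 2*k+2+u-2*k = u+2 by omega]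
    simp only [show 2*k+2+u-1 = 2*k+1+u by omega,
      show 2*k+2+u+1 = 2*k+3+u by omega]
    rw [← add_mul, ← add_mul, ← Polynomial.C_add, ← Polynomial.C_add, key k u]
  linear_combination hsum + h0

lemma qInt_zero : qInt 0 = 0 := by simp [qInt]

lemma smul_CX (c b : F) (e : ℕ) :
    c • (Polynomial.C b * Polynomial.X ^ e) = Polynomial.C (c * b) * Polynomial.X ^ e := by
  rw [← smul_mul_assoc, Polynomial.smul_C, smul_eq_mul]

theorem lucas_recurrence (n : ℕ) (hn : 2 ≤ n) :
    (Xop + ((1 - q) * s) • Dq) (L (-s) n) = L (-s) (n + 1) + Polynomial.C s * L (-s) (n - 1) := by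
  rw [L_eq (-s) n (by omega), L_eq (-s) (n+1) (by omega), L_eq (-s) (n-1) (by omega)]
  rw [LinearMap.add_apply, LinearMap.smul_apply, map_sum, map_sum, Finset.smul_sum]
  simp only [Xop_monomial, Dq_monomial, smul_CX]
  have hRHS : Polynomial.C s * ∑ k ∈ Finset.range ((n-1)/2+1),
      Polynomial.C (a (n-1) k * (-s)^k) * Polynomial.X^(n-1-2*k)
      = ∑ k ∈ Finset.range ((n-1)/2+1),
        Polynomial.C (s * (a (n-1) k * (-s)^k)) * Polynomial.X^(n-1-2*k) := by
    rw [Finset.mul_sum]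
    exact Finset.sum_congr rfl fun k _ => by rw [← mul_assoc, ← Polynomial.C_mul]
  rw [hRHS]
  rcases Nat.even_or_odd' n with ⟨m, hm | hm⟩
  · -- n = 2*m, m ≥ 1
    subst hm
    have hm1 : 1 ≤ m := by omega
    rw [show 2*m/2+1 = m+1 by omega, show (2*m+1)/2+1 = m+1 by omega,
        show (2*m-1)/2+1 = m by omega]
    -- normalize exponents in first LHS sum
    have e1 : (∑ k ∈ Finset.range (m+1),
        Polynomial.C (a (2*m) k * (-s)^k) * Polynomial.X^(2*m-2*k+1))
        = ∑ k ∈ Finset.range (m+1),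
          Polynomial.C (a (2*m) k * (-s)^k) * Polynomial.X^(2*m+1-2*k) := by
      refine Finset.sum_congr rfl fun k hk => ?_
      have := Finset.mem_range.mp hk
      rw [show 2*m-2*k+1 = 2*m+1-2*k by omega]
    rw [e1]
    simp only [show ∀ k, 2*m-2*k-1 = 2*m-1-2*k from fun k => by omega]
    -- peel the vanishing last term of the Dq-sum
    rw [Finset.sum_range_succ (fun k => Polynomial.C ((1-q)*s*(a (2*m) k * (-s)^k * qInt (2*m-2*k))) * Polynomial.X^(2*m-1-2*k)) m]
    rw [show 2*m-2*m = 0 by omega, qInt_zero]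
    simp only [mul_zero, map_zero, zero_mul, add_zero]
    exact core (2*m) m hm1 (by omega)
  · -- n = 2*m+1, m ≥ 1
    subst hm
    have hm1 : 1 ≤ m := by omega
    rw [show (2*m+1)/2+1 = m+1 by omega, show (2*m+1+1)/2+1 = m+2 by omega,
        show (2*m+1-1)/2+1 = m+1 by omega]
    have e1 : (∑ k ∈ Finset.range (m+1),
        Polynomial.C (a (2*m+1) k * (-s)^k) * Polynomial.X^(2*m+1-2*k+1))
        = ∑ k ∈ Finset.range (m+1),
          Polynomial.C (a (2*m+1) k * (-s)^k) * Polynomial.X^(2*m+1+1-2*k) := by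
      refine Finset.sum_congr rfl fun k hk => ?_
      have := Finset.mem_range.mp hk
      rw [show 2*m+1-2*k+1 = 2*m+1+1-2*k by omega]
    rw [e1]
    simp only [show ∀ k, 2*m+1-2*k-1 = 2*m+1-1-2*k from fun k => by omega]
    -- peel last terms
    rw [Finset.sum_range_succ (fun k => Polynomial.C ((1-q)*s*(a (2*m+1) k * (-s)^k * qInt (2*m+1-2*k))) * Polynomial.X^(2*m+1-1-2*k)) m]
    rw [Finset.sum_range_succ (fun k => Polynomial.C (a (2*m+1+1) k * (-s)^k) * Polynomial.X^(2*m+1+1-2*k)) (m+1)]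
    rw [Finset.sum_range_succ (fun k => Polynomial.C (s * (a (2*m+1-1) k * (-s)^k)) * Polynomial.X^(2*m+1-1-2*k)) m]
    have hc := core (2*m+1) m hm1 (by omega)
    have htop : Polynomial.C ((1-q)*s*(a (2*m+1) m * (-s)^m * qInt (2*m+1-2*m))) * Polynomial.X^(2*m+1-1-2*m)
        = Polynomial.C (a (2*m+1+1) (m+1) * (-s)^(m+1)) * Polynomial.X^(2*m+1+1-2*(m+1))
          + Polynomial.C (s * (a (2*m+1-1) m * (-s)^m)) * Polynomial.X^(2*m+1-1-2*m) := by
      rw [show 2*m+1-2*m = 1 by omega, show 2*m+1-1-2*m = 0 by omega,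
          show 2*m+1+1-2*(m+1) = 0 by omega, show 2*m+1+1 = 2*m+2 by omega,
          show 2*m+1-1 = 2*m by omega, keyTop m hm1, map_add, add_mul]
    linear_combination hc + htop

end
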